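/- Consider the block-level SB slot-variant problem: maximize t over tuples (x_1,…,x_{N_s}, t) with x_i ∈ ℂ^{N_t} subject to CI_i(x_i, t) for all i = 1,…,N_s and ∑_{i=1}^{N_s} ‖x_i‖² ≤ P, where P > 0. If (x_1,…,x_{N_s}, t*) is an optimal solution of this problem (i.e., feasible, and every feasible tuple has its last coordinate ≤ t*) and t* > 0, then the power constraint is active at the optimum: ∑_{i=1}^{N_s} ‖x_i‖² = P. -/
import Mathlib


open scoped BigOperators

/-- The constructive-interference (CI) constraint in a given symbol slot:
`CI Nt Nr M h s γ σ x t` holds iff for every user `k`,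
`Re((h_kᵀ x)/s_k) − |Im((h_kᵀ x)/s_k)| / tan(π/M) ≥ t·√(γ_k)·σ`. -/
noncomputable def CI (Nt Nr M : ℕ) (h : Fin Nr → Fin Nt → ℂ)
    (s : Fin Nr → ℂ) (γ : Fin Nr → ℝ) (σ : ℝ)
    (x : Fin Nt → ℂ) (t : ℝ) : Prop :=
  ∀ k : Fin Nr,
    ((∑ j, h k j * x j) / s k).re -
        |((∑ j, h k j * x j) / s k).im| / Real.tan (Real.pi / M) ≥
      t * Real.sqrt (γ k) * σ

/-- If `(x, t*)` is optimal for the block-level SB slot-variant problem and `t* > 0`,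
then the block-level power constraint is active: `∑ᵢ ‖xᵢ‖² = P`. -/
theorem stmt0 (Nt Nr Ns M : ℕ) (hNt : 0 < Nt) (hNr : 0 < Nr) (hNs : 0 < Ns)
    (hM : 3 ≤ M)
    (h : Fin Nr → Fin Nt → ℂ)
    (s : Fin Nr → Fin Ns → ℂ) (hs : ∀ k i, s k i ≠ 0)
    (γ : Fin Nr → Fin Ns → ℝ) (hγ : ∀ k i, 0 ≤ γ k i)
    (σ : ℝ) (hσ : 0 < σ)
    (P : ℝ) (hP : 0 < P)
    (x : Fin Ns → Fin Nt → ℂ) (tstar : ℝ) (htstar : 0 < tstar)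
    (hfeas : ∀ i, CI Nt Nr M h (fun k => s k i) (fun k => γ k i) σ (x i) tstar)
    (hpow : ∑ i, ∑ j, ‖x i j‖ ^ 2 ≤ P)
    (hopt : ∀ (y : Fin Ns → Fin Nt → ℂ) (t : ℝ),
      (∀ i, CI Nt Nr M h (fun k => s k i) (fun k => γ k i) σ (y i) t) →
      (∑ i, ∑ j, ‖y i j‖ ^ 2 ≤ P) → t ≤ tstar) :
    ∑ i, ∑ j, ‖x i j‖ ^ 2 = P := by

  by_contra hne
  have hlt : ∑ i, ∑ j, ‖x i j‖ ^ 2 < P := lt_of_le_of_ne hpow hne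
  set S : ℝ := ∑ i, ∑ j, ‖x i j‖ ^ 2 with hS
  have hS0 : 0 ≤ S := by
    apply Finset.sum_nonneg; intro i _
    apply Finset.sum_nonneg; intro j _
    positivity
  rcases eq_or_lt_of_le hS0 with hSz | hSpos
  · -- S = 0 : CI holds for any t ≥ 0, so 2·t* feasible
    have hxz : ∀ i j, x i j = 0 := by
      intro i j
      have h1 : ∑ j, ‖x i j‖ ^ 2 = 0 := by
        have := (Finset.sum_eq_zero_iff_of_nonneg (fun i _ => Finset.sum_nonneg
          (fun j _ => by positivity))).mp hSz.symm i (Finset.mem_univ i)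
        exact this
      have := (Finset.sum_eq_zero_iff_of_nonneg (fun j _ => by positivity)).mp h1 j
        (Finset.mem_univ j)
      simpa using this
    have hCI2 : ∀ i, CI Nt Nr M h (fun k => s k i) (fun k => γ k i) σ (x i)
        (2 * tstar) := by
      intro i k
      have h0 := hfeas i k
      have hx0 : (∑ j, h k j * x i j) = 0 := by
        apply Finset.sum_eq_zero; intro j _; rw [hxz i j, mul_zero]
      rw [hx0] at h0 ⊢
      simp only [zero_div, Complex.zero_re, Complex.zero_im, abs_zero] at h0 ⊢
      have hγ0 : Real.sqrt (γ k i) * σ ≤ 0 := by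
        nlinarith [Real.sqrt_nonneg (γ k i), mul_nonneg (Real.sqrt_nonneg (γ k i)) hσ.le]
      nlinarith [Real.sqrt_nonneg (γ k i)]
    have := hopt x (2 * tstar) hCI2 hpow
    linarith
  · -- 0 < S < P : scale by c = √(P/S)
    set c : ℝ := Real.sqrt (P / S) with hc
    have hcpos : 0 < c := Real.sqrt_pos.mpr (div_pos hP hSpos)
    have hc2 : c ^ 2 = P / S := Real.sq_sqrt (div_pos hP hSpos).le
    have hc1 : 1 < c := by
      rw [hc]
      have : 1 < P / S := (one_lt_div hSpos).mpr hlt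
      calc (1:ℝ) = Real.sqrt 1 := (Real.sqrt_one).symm
        _ < Real.sqrt (P / S) := Real.sqrt_lt_sqrt zero_le_one this
    set y : Fin Ns → Fin Nt → ℂ := fun i j => (c : ℂ) * x i j with hy
    have hCIy : ∀ i, CI Nt Nr M h (fun k => s k i) (fun k => γ k i) σ (y i)
        (c * tstar) := by
      intro i k
      have h0 := hfeas i k
      have hsum : (∑ j, h k j * y i j) = (c : ℂ) * ∑ j, h k j * x i j := by
        rw [Finset.mul_sum]; apply Finset.sum_congr rfl; intro j _; ring
      rw [hsum, mul_div_assoc]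
      set z : ℂ := (∑ j, h k j * x i j) / s k i with hz
      have hre : ((c : ℂ) * z).re = c * z.re := by simp
      have him : ((c : ℂ) * z).im = c * z.im := by simp
      rw [hre, him, abs_mul, abs_of_pos hcpos]
      have h0' : z.re - |z.im| / Real.tan (Real.pi / M) ≥
          tstar * Real.sqrt (γ k i) * σ := h0
      calc c * z.re - c * |z.im| / Real.tan (Real.pi / M)
          = c * (z.re - |z.im| / Real.tan (Real.pi / M)) := by ring
        _ ≥ c * (tstar * Real.sqrt (γ k i) * σ) := by
            apply mul_le_mul_of_nonneg_left h0' hcpos.le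
        _ = c * tstar * Real.sqrt (γ k i) * σ := by ring
    have hpowy : ∑ i, ∑ j, ‖y i j‖ ^ 2 ≤ P := by
      have : ∑ i, ∑ j, ‖y i j‖ ^ 2 = c ^ 2 * S := by
        rw [hS, Finset.mul_sum]
        apply Finset.sum_congr rfl; intro i _
        rw [Finset.mul_sum]
        apply Finset.sum_congr rfl; intro j _
        simp only [hy, norm_mul, Complex.norm_real, Real.norm_eq_abs,
          abs_of_pos hcpos]
        ring
      rw [this, hc2, div_mul_cancel₀]
      exact hSpos.ne'
    have := hopt y (c * tstar) hCIy hpowy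
    nlinarith
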